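/- Let Λ be a numerical semigroup with conductor c = c(Λ) and rank k = k(Λ), and let λ be an integer with c ≤ λ < 2c. Let j be the unique index with 0 ≤ j ≤ k−1 and λ_j ≤ λ − c < λ_{j+1}. Then λ − λ_j is an order-j seed of Λ if and only if λ is not the sum of two left elements of Λ. -/
import Mathlib


/-- A numerical semigroup: a cofinite submonoid of ℕ, viewed as a set of naturals. -/
def IsNumericalSemigroup (S : Set ℕ) : Prop :=
  0 ∈ S ∧ (∀ a ∈ S, ∀ b ∈ S, a + b ∈ S) ∧ ∃ N : ℕ, ∀ n : ℕ, N ≤ n → n ∈ S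

/-- The conductor: the smallest `N` such that every `n ≥ N` belongs to `S`. -/
noncomputable def sgConductor (S : Set ℕ) : ℕ :=
  sInf {N : ℕ | ∀ n : ℕ, N ≤ n → n ∈ S}

/-- The genus: the number of gaps. -/
noncomputable def sgGenus (S : Set ℕ) : ℕ :=
  Sᶜ.ncard

/-- The rank `k(Λ) = c(Λ) - g(Λ)`. -/
noncomputable def sgRank (S : Set ℕ) : ℕ :=
  sgConductor S - sgGenus S

/-- The multiplicity: the smallest nonzero element. -/
noncomputable def sgMultiplicity (S : Set ℕ) : ℕ :=
  sInf {n : ℕ | n ∈ S ∧ n ≠ 0}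

/-- The Frobenius number: the largest gap, i.e. the conductor minus one. -/
noncomputable def sgFrobenius (S : Set ℕ) : ℕ :=
  sgConductor S - 1

/-- `sgElem S j` is the element `λ_j` of `S = {λ_0 = 0 < λ_1 < λ_2 < ⋯}`. -/
noncomputable def sgElem (S : Set ℕ) (j : ℕ) : ℕ :=
  Nat.nth (· ∈ S) j

/-- The jump `u_j = λ_{j+1} - λ_j`. -/
noncomputable def sgJump (S : Set ℕ) (j : ℕ) : ℕ :=
  sgElem S (j + 1) - sgElem S j

/-- The left elements: elements of `S` smaller than the Frobenius number. -/
def sgLeftElements (S : Set ℕ) : Set ℕ :=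
  {x : ℕ | x ∈ S ∧ x + 1 < sgConductor S}

/-- A minimal generator: a nonzero element not the sum of two nonzero elements. -/
def IsMinimalGenerator (S : Set ℕ) (x : ℕ) : Prop :=
  x ∈ S ∧ x ≠ 0 ∧ ¬ ∃ a ∈ S, ∃ b ∈ S, a ≠ 0 ∧ b ≠ 0 ∧ a + b = x

/-- A right generator: a minimal generator larger than the Frobenius number. -/
def IsRightGenerator (S : Set ℕ) (x : ℕ) : Prop :=
  IsMinimalGenerator S x ∧ sgFrobenius S < x

/-- A strong generator: a right generator `μ` such that `μ + m(Λ)` is a minimal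
generator of `Λ ∖ {μ}`. -/
noncomputable def IsStrongGenerator (S : Set ℕ) (x : ℕ) : Prop :=
  IsRightGenerator S x ∧ IsMinimalGenerator (S \ {x}) (x + sgMultiplicity S)

/-- A new generator of `Λ`: a minimal generator of `Λ` that is not a minimal
generator of `Λ ∪ {F(Λ)}`. -/
noncomputable def IsNewGenerator (S : Set ℕ) (x : ℕ) : Prop :=
  IsMinimalGenerator S x ∧ ¬ IsMinimalGenerator (S ∪ {sgFrobenius S}) x

/-- `x` (an element `λ_s ≥ c(Λ)`) is an order-`p` seed of `Λ` if
`x + λ_p ≠ λ_i + λ_j` for all `p < i ≤ j < s`, i.e. for all `i ≤ j` with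
`p < i` and `λ_j < x`. -/
noncomputable def IsSeed (S : Set ℕ) (p x : ℕ) : Prop :=
  sgConductor S ≤ x ∧ ∀ i j : ℕ, p < i → i ≤ j → sgElem S j < x →
    x + sgElem S p ≠ sgElem S i + sgElem S j

/-- `T` is a child of `S`: obtained by removing one right generator. -/
def IsChild (T S : Set ℕ) : Prop :=
  ∃ μ : ℕ, IsRightGenerator S μ ∧ T = S \ {μ}

/-- A grandchild: a child of a child. -/
def IsGrandchild (T S : Set ℕ) : Prop :=
  ∃ C : Set ℕ, IsChild C S ∧ IsChild T C

/-- A great-grandchild: a child of a grandchild. -/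
def IsGreatGrandchild (T S : Set ℕ) : Prop :=
  ∃ C : Set ℕ, IsGrandchild C S ∧ IsChild T C

/-- `⟨a,b,c,…⟩|_κ`: the smallest numerical semigroup containing a given set. -/
def sgClosure (A : Set ℕ) : Set ℕ :=
  ⋂₀ {S : Set ℕ | IsNumericalSemigroup S ∧ A ⊆ S}


theorem statement0 (S : Set ℕ) (hS : IsNumericalSemigroup S)
    (lam j : ℕ)
    (hc : sgConductor S ≤ lam) (hc2 : lam < 2 * sgConductor S)
    (hjk : j < sgRank S)
    (hj1 : sgElem S j ≤ lam - sgConductor S)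
    (hj2 : lam - sgConductor S < sgElem S (j + 1)) :
    IsSeed S j (lam - sgElem S j) ↔
      ¬ ∃ a ∈ sgLeftElements S, ∃ b ∈ sgLeftElements S, a + b = lam := by
  classical
  obtain ⟨h0, hadd, N, hN⟩ := hS
  have hinf : (setOf (· ∈ S)).Infinite :=
    Set.Infinite.mono (fun n hn => hN n hn) (Set.Ici_infinite N)
  have hne : {M : ℕ | ∀ n : ℕ, M ≤ n → n ∈ S}.Nonempty := ⟨N, fun n hn => hN n hn⟩
  have hcmem : ∀ n : ℕ, sgConductor S ≤ n → n ∈ S := Nat.sInf_mem hne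
  have hc1 : 1 ≤ sgConductor S := by
    have : sgRank S ≤ sgConductor S := Nat.sub_le _ _
    omega
  have hFnot : sgConductor S - 1 ∉ S := by
    intro hmem
    have : sgConductor S ≤ sgConductor S - 1 := Nat.sInf_le (fun n hn => by
      rcases Nat.eq_or_lt_of_le hn with h | h
      · exact h ▸ hmem
      · exact hcmem n (by omega))
    omega
  have hmono : ∀ {a b : ℕ}, sgElem S a ≤ sgElem S b ↔ a ≤ b :=
    fun {a b} => Nat.nth_le_nth hinf
  have hsmono : ∀ {a b : ℕ}, sgElem S a < sgElem S b ↔ a < b :=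
    fun {a b} => Nat.nth_lt_nth hinf
  have hmem : ∀ n : ℕ, sgElem S n ∈ S := fun n => Nat.nth_mem_of_infinite hinf n
  have hlt_c : ∀ {x : ℕ}, x ∈ S → x < sgConductor S → x + 1 < sgConductor S := by
    intro x hx hxc
    rcases Nat.lt_or_ge (x + 1) (sgConductor S) with h | h
    · exact h
    · exfalso; have hx' : x = sgConductor S - 1 := by omega
      exact hFnot (hx' ▸ hx)
  have hjle : sgElem S j + sgConductor S ≤ lam := by omega
  have hjp1 : lam < sgConductor S + sgElem S (j + 1) := by omega
  constructor
  · rintro ⟨_, hseed⟩ ⟨a, ⟨haS, hac⟩, b, ⟨hbS, hbc⟩, hab⟩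
    rcases Nat.le_total a b with hab2 | hab2
    · obtain ⟨i, -, hi⟩ := Nat.exists_lt_card_nth_eq (p := (· ∈ S)) haS
      obtain ⟨jj, -, hjj⟩ := Nat.exists_lt_card_nth_eq (p := (· ∈ S)) hbS
      have hi' : sgElem S i = a := hi
      have hjj' : sgElem S jj = b := hjj
      have hij : i ≤ jj := hmono.mp (by omega)
      have hji : j < i := hsmono.mp (by omega)
      exact hseed i jj hji hij (by omega) (by omega)
    · obtain ⟨i, -, hi⟩ := Nat.exists_lt_card_nth_eq (p := (· ∈ S)) hbS
      obtain ⟨jj, -, hjj⟩ := Nat.exists_lt_card_nth_eq (p := (· ∈ S)) haS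
      have hi' : sgElem S i = b := hi
      have hjj' : sgElem S jj = a := hjj
      have hij : i ≤ jj := hmono.mp (by omega)
      have hji : j < i := hsmono.mp (by omega)
      exact hseed i jj hji hij (by omega) (by omega)
  · intro hnot
    refine ⟨by omega, ?_⟩
    intro i jj hji hij hjlt heq
    apply hnot
    have hiS : sgElem S i ∈ S := hmem i
    have hjS : sgElem S jj ∈ S := hmem jj
    have hige : sgElem S (j + 1) ≤ sgElem S i := hmono.mpr hji
    have hlej : sgElem S i ≤ sgElem S jj := hmono.mpr hij
    have hjjlt : sgElem S jj < sgConductor S := by omega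
    have hilt : sgElem S i < sgConductor S := by omega
    exact ⟨sgElem S i, ⟨hiS, hlt_c hiS hilt⟩, sgElem S jj, ⟨hjS, hlt_c hjS hjjlt⟩, by omega⟩
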